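/- Let τ ∈ (1,2), γ ∈ (0,1), and set ς := (2−τ)/τ ∈ (0,1) and σ := (τ−1)/ς = τ(τ−1)/(2−τ). Let c > 0, M > 0, 𝔑 > 0, let ω > γ, and let N ≥ 1 be an integer. Let (λ_j)_{j∈ℕ} be a sequence of positive real numbers with λ_j → +∞, and for each l ∈ {1,…,N} set ϖ_l := min_{j∈ℕ} |ω²l² − λ_j|, attained at some index j*(l). Assume: (i) |ωl − √λ_j| > γ/l^τ for all l ∈ {1,…,N} and all j ∈ ℕ; (ii) |ωl − j/c| > γ/l^τ for all l ∈ {1,…,N} and all j ∈ ℕ; (iii) for every l ∈ {1,…,N}, j*(l) ≥ 𝔑·ω·l and |√λ_{j*(l)} − j*(l)/c| ≤ M/j*(l). Then there exists a constant L > 0, depending only on τ and on M/𝔑, such that for all k, l ∈ {1,…,N} with k ≠ l: 1/√(ϖ_l · ϖ_k) ≤ |k−l|^σ/(L·γ³·ω); equivalently ϖ_l·ϖ_k ≥ L²γ⁶ω²·|k−l|^{−2σ}. -/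

import Mathlib

set_option maxHeartbeats 800000

private lemma finish_aux' (P e s X : ℝ) (hP : 0 < P) (he : 0 ≤ e) (hX : 0 < X)
    (h : X ^ 2 ≤ P * e ^ (2 * s)) : 1 / Real.sqrt P ≤ e ^ s / X := by
  have hes : 0 ≤ e ^ s := Real.rpow_nonneg he s
  have h2 : e ^ (2 * s) = (e ^ s) ^ 2 := by
    rw [mul_comm, Real.rpow_mul he, ← Real.rpow_natCast (e ^ s) 2]
    norm_num
  have hXle : X ≤ Real.sqrt P * e ^ s := by
    have h3 := Real.sqrt_le_sqrt h
    rwa [Real.sqrt_sq hX.le, h2, Real.sqrt_mul hP.le, Real.sqrt_sq hes] at h3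
  have hsP : 0 < Real.sqrt P := Real.sqrt_pos.mpr hP
  rw [div_le_div_iff₀ hsP hX, one_mul]
  nlinarith [hXle]

private lemma claimF1_core (τ γ ω r a b wa wb : ℝ)
    (hτ1 : 1 < τ) (hτ2 : τ < 2)
    (hγ0 : 0 < γ) (hγ1 : γ < 1) (hγω : γ < ω) (hr : 0 < r)
    (ha1 : 1 ≤ a) (hd1 : 1 ≤ b - a)
    (hwa : γ * ω * a ^ (1 - τ) ≤ wa)
    (hwb : γ * ω * b ^ (1 - τ) ≤ wb)
    (hsum : γ / (b - a) ^ τ < (wb + r) / (ω * b) + (wa + r) / (ω * a)) :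
    ((4 * r + 1) ^ (1 - τ) / 4 * γ ^ 3 * ω) ^ 2
      ≤ wb * wa * (b - a) ^ (2 * (τ * (τ - 1) / (2 - τ))) := by
  have hω0 : 0 < ω := hγ0.trans hγω
  have ha0 : 0 < a := lt_of_lt_of_le one_pos ha1
  have hd0 : 0 < b - a := lt_of_lt_of_le one_pos hd1
  have hb1 : 1 ≤ b := by linarith
  have hb0 : 0 < b := by linarith
  have h2τ : 0 < 2 - τ := by linarith
  set d := b - a with hdd
  set σ := τ * (τ - 1) / (2 - τ) with hσ
  set q := τ / (2 - τ) with hq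
  have hq1 : 1 ≤ q := by rw [hq, le_div_iff₀ h2τ]; linarith
  have hσpos : 0 < σ := by
    rw [hσ]; exact div_pos (mul_pos (by linarith) (by linarith)) h2τ
  have hqσ : q * (1 - τ) = -σ := by rw [hq, hσ]; field_simp; ring
  have hqτ : q * (2 - τ) = τ := by rw [hq]; field_simp
  set L0 := (4 * r + 1) ^ (1 - τ) with hL0
  have hL0pos : 0 < L0 := Real.rpow_pos_of_pos (by linarith) _
  have hL01 : L0 ≤ 1 := Real.rpow_le_one_of_one_le_of_nonpos (by linarith) (by linarith)
  have hγ62 : γ ^ 6 ≤ γ ^ 2 := pow_le_pow_of_le_one hγ0.le hγ1.le (by norm_num)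
  have hD1 : (1 : ℝ) ≤ d ^ (2 * σ) := Real.one_le_rpow hd1 (by positivity)
  have hD0 : (0 : ℝ) ≤ d ^ (2 * σ) := by positivity
  have hwa0 : 0 < wa := lt_of_lt_of_le (by positivity) hwa
  have hwb0 : 0 < wb := lt_of_lt_of_le (by positivity) hwb
  have hdq : d ≤ d ^ q := by
    nth_rewrite 1 [← Real.rpow_one d]
    exact Real.rpow_le_rpow_of_exponent_le hd1 hq1
  have hdτ : d ≤ d ^ τ := by
    nth_rewrite 1 [← Real.rpow_one d]
    exact Real.rpow_le_rpow_of_exponent_le hd1 (by linarith)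
  have hdτ1 : (1 : ℝ) ≤ d ^ τ := Real.one_le_rpow hd1 (by linarith)
  have hdτ0 : (0 : ℝ) < d ^ τ := by positivity
  have hγ2 : (0:ℝ) < γ ^ 2 := by positivity
  have h21 : (1 : ℝ) / 2 ≤ (2 : ℝ) ^ (1 - τ) := by
    have h := Real.rpow_le_rpow_of_exponent_le (one_le_two)
      (show (-1 : ℝ) ≤ 1 - τ by linarith)
    rwa [Real.rpow_neg_one, show ((2:ℝ))⁻¹ = 1/2 by norm_num] at h
  -- goal restated
  have hgoal : ((4 * r + 1) ^ (1 - τ) / 4 * γ ^ 3 * ω) ^ 2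
      = L0 * L0 * γ ^ 6 * ω ^ 2 / 16 := by rw [hL0]; ring
  rw [hgoal]
  rcases le_or_gt a (d ^ q) with h1 | h1
  · -- Case 1a : a small, use basic lower bounds on both
    set A := (2 * d ^ q) ^ (1 - τ) with hA
    have hdq0 : (0:ℝ) < d ^ q := by positivity
    have hA0 : 0 < A := by positivity
    have hbA : γ * ω * A ≤ wb := by
      refine le_trans (mul_le_mul_of_nonneg_left ?_ (by positivity)) hwb
      exact Real.rpow_le_rpow_of_nonpos hb0 (by linarith) (by linarith)
    have haA : γ * ω * A ≤ wa := by
      refine le_trans (mul_le_mul_of_nonneg_left ?_ (by positivity)) hwa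
      exact Real.rpow_le_rpow_of_nonpos ha0 (by linarith) (by linarith)
    have hAeq : A = (2:ℝ) ^ (1 - τ) * d ^ (-σ) := by
      rw [hA, Real.mul_rpow (by norm_num) hdq0.le, ← Real.rpow_mul hd0.le, hqσ]
    have hdcancel : d ^ (-σ) * d ^ (-σ) * d ^ (2 * σ) = 1 := by
      rw [← Real.rpow_add hd0, ← Real.rpow_add hd0,
        show -σ + -σ + 2 * σ = 0 by ring, Real.rpow_zero]
    have hcomp : A * A * d ^ (2 * σ) = (2:ℝ) ^ (1 - τ) * (2:ℝ) ^ (1 - τ) := by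
      calc A * A * d ^ (2 * σ)
          = ((2:ℝ) ^ (1-τ) * (2:ℝ) ^ (1-τ)) * (d ^ (-σ) * d ^ (-σ) * d ^ (2*σ)) := by
            rw [hAeq]; ring
        _ = (2:ℝ) ^ (1 - τ) * (2:ℝ) ^ (1 - τ) := by rw [hdcancel, mul_one]
    have hP : γ * ω * A * (γ * ω * A) ≤ wb * wa :=
      mul_le_mul hbA haA (by positivity) hwb0.le
    have hPD : γ * ω * A * (γ * ω * A) * d ^ (2 * σ) ≤ wb * wa * d ^ (2 * σ) :=
      mul_le_mul_of_nonneg_right hP hD0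
    have heq2 : γ * ω * A * (γ * ω * A) * d ^ (2 * σ)
        = γ ^ 2 * ω ^ 2 * (A * A * d ^ (2 * σ)) := by ring
    rw [heq2, hcomp] at hPD
    have s1 : L0 * L0 ≤ 1 := by nlinarith only [hL0pos, hL01]
    have s3 : (1:ℝ)/4 ≤ (2:ℝ) ^ (1-τ) * (2:ℝ) ^ (1-τ) := by
      nlinarith only [h21]
    have m1 : L0 * L0 * (γ ^ 6 * ω ^ 2 / 16) ≤ 1 * (γ ^ 6 * ω ^ 2 / 16) :=
      mul_le_mul_of_nonneg_right s1 (by positivity)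
    have m2 : γ ^ 6 * ω ^ 2 ≤ γ ^ 2 * ω ^ 2 :=
      mul_le_mul_of_nonneg_right hγ62 (sq_nonneg ω)
    have m3 : γ ^ 2 * ω ^ 2 * (1/4) ≤ γ ^ 2 * ω ^ 2 * ((2:ℝ) ^ (1-τ) * (2:ℝ) ^ (1-τ)) :=
      mul_le_mul_of_nonneg_left s3 (by positivity)
    have m4 : (0:ℝ) ≤ γ ^ 2 * ω ^ 2 := by positivity
    linarith only [m1, m2, m3, m4, hPD]
  · rcases le_or_gt a (4 * r * d ^ τ / γ ^ 2) with h2 | h2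
    · -- Case 1b : medium regime
      set Y := (4 * r + 1) * d ^ τ with hY
      have hY0 : 0 < Y := by positivity
      have hY1 : 1 ≤ Y := by rw [hY]; nlinarith only [hdτ1, hr]
      have hγ21 : γ ^ 2 ≤ 1 := by nlinarith only [hγ0, hγ1]
      set X := Y / γ ^ 2 with hX
      have hX0 : 0 < X := by positivity
      have hdτγ : d ≤ d ^ τ / γ ^ 2 := by
        rw [le_div_iff₀ hγ2]; nlinarith only [hdτ, hγ21, hd0, hγ2]
      have hXsplit : X = 4 * r * d ^ τ / γ ^ 2 + d ^ τ / γ ^ 2 := by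
        rw [hX, hY]; ring
      have hbX : b ≤ X := by rw [hXsplit]; linarith
      have haX : a ≤ X := by
        have hpos : 0 < d ^ τ / γ ^ 2 := by positivity
        rw [hXsplit]; linarith only [h2, hpos]
      have hXb : X ^ (1 - τ) ≤ b ^ (1 - τ) :=
        Real.rpow_le_rpow_of_nonpos hb0 hbX (by linarith)
      have hXa : X ^ (1 - τ) ≤ a ^ (1 - τ) :=
        Real.rpow_le_rpow_of_nonpos ha0 haX (by linarith)
      have hXeq : X ^ (1 - τ) = Y ^ (1 - τ) / (γ ^ 2) ^ (1 - τ) := by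
        rw [hX, Real.div_rpow hY0.le hγ2.le]
      have hYpos : 0 < Y ^ (1 - τ) := Real.rpow_pos_of_pos hY0 _
      have hcc : γ ^ 2 * (γ ^ 2) ^ (1 - τ) = (γ ^ 2) ^ (2 - τ) := by
        nth_rewrite 1 [← Real.rpow_one (γ ^ 2)]
        rw [← Real.rpow_add hγ2, show (1:ℝ) + (1 - τ) = 2 - τ by ring]
      have hle1 : (γ ^ 2) ^ (2 - τ) ≤ 1 := Real.rpow_le_one hγ2.le hγ21 (by linarith)
      have hXY : γ ^ 2 * Y ^ (1 - τ) ≤ X ^ (1 - τ) := by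
        rw [hXeq, le_div_iff₀ (Real.rpow_pos_of_pos hγ2 _)]
        have h9 : Y ^ (1-τ) * (γ ^ 2 * (γ ^ 2) ^ (1-τ)) ≤ Y ^ (1-τ) * 1 := by
          rw [hcc]; exact mul_le_mul_of_nonneg_left hle1 hYpos.le
        calc γ ^ 2 * Y ^ (1-τ) * (γ ^ 2) ^ (1-τ)
            = Y ^ (1-τ) * (γ ^ 2 * (γ ^ 2) ^ (1-τ)) := by ring
          _ ≤ Y ^ (1-τ) * 1 := h9
          _ = Y ^ (1-τ) := mul_one _
      have hwb' : γ ^ 3 * ω * Y ^ (1 - τ) ≤ wb := by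
        refine le_trans ?_ hwb
        have : γ ^ 3 * ω * Y ^ (1-τ) = γ * ω * (γ^2 * Y ^ (1-τ)) := by ring
        rw [this]
        exact mul_le_mul_of_nonneg_left (hXY.trans hXb) (by positivity)
      have hwa' : γ ^ 3 * ω * Y ^ (1 - τ) ≤ wa := by
        refine le_trans ?_ hwa
        have : γ ^ 3 * ω * Y ^ (1-τ) = γ * ω * (γ^2 * Y ^ (1-τ)) := by ring
        rw [this]
        exact mul_le_mul_of_nonneg_left (hXY.trans hXa) (by positivity)
      have hYexp : Y ^ (1 - τ) = L0 * d ^ (τ * (1 - τ)) := by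
        rw [hY, Real.mul_rpow (by linarith) hdτ0.le, ← Real.rpow_mul hd0.le, hL0]
      have hexp0 : 0 ≤ τ * (1 - τ) + τ * (1 - τ) + 2 * σ := by
        have : τ * (1 - τ) + τ * (1 - τ) + 2 * σ = 2 * τ * (τ - 1) ^ 2 / (2 - τ) := by
          rw [hσ]; field_simp; ring
        rw [this]; positivity
      have hYcomp : L0 * L0 ≤ Y ^ (1 - τ) * Y ^ (1 - τ) * d ^ (2 * σ) := by
        rw [hYexp]
        have : L0 * d ^ (τ*(1-τ)) * (L0 * d ^ (τ*(1-τ))) * d ^ (2*σ)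
            = L0 * L0 * d ^ (τ*(1-τ) + τ*(1-τ) + 2*σ) := by
          rw [Real.rpow_add hd0, Real.rpow_add hd0]; ring
        rw [this]
        have hE := Real.one_le_rpow hd1 hexp0
        have h8 : L0 * L0 * 1 ≤ L0 * L0 * d ^ (τ*(1-τ) + τ*(1-τ) + 2*σ) :=
          mul_le_mul_of_nonneg_left hE (mul_pos hL0pos hL0pos).le
        linarith only [h8]
      have hP : γ ^ 3 * ω * Y ^ (1-τ) * (γ ^ 3 * ω * Y ^ (1-τ)) ≤ wb * wa :=
        mul_le_mul hwb' hwa' (by positivity) hwb0.le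
      have hPD : γ ^ 3 * ω * Y ^ (1-τ) * (γ ^ 3 * ω * Y ^ (1-τ)) * d ^ (2*σ)
          ≤ wb * wa * d ^ (2*σ) := mul_le_mul_of_nonneg_right hP hD0
      have heq2 : γ ^ 3 * ω * Y ^ (1-τ) * (γ ^ 3 * ω * Y ^ (1-τ)) * d ^ (2*σ)
          = γ ^ 6 * ω ^ 2 * (Y ^ (1-τ) * Y ^ (1-τ) * d ^ (2*σ)) := by ring
      rw [heq2] at hPD
      have m1 : γ ^ 6 * ω ^ 2 * (L0 * L0)
          ≤ γ ^ 6 * ω ^ 2 * (Y ^ (1-τ) * Y ^ (1-τ) * d ^ (2*σ)) :=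
        mul_le_mul_of_nonneg_left hYcomp (by positivity)
      have m0 : 0 ≤ γ ^ 6 * ω ^ 2 * (L0 * L0) := by positivity
      linarith only [m1, hPD, m0]
    · -- Case 2 : large regime
      have hda : d < a := lt_of_le_of_lt hdq h1
      have hbad : b = a + d := by rw [hdd]; ring
      have hba : b ≤ 2 * a := by linarith only [hbad, hda]
      have hωa : 0 < ω * a := by positivity
      have hωb : 0 < ω * b := by positivity
      have hωab : ω * a ≤ ω * b := by nlinarith only [hω0, hd1, hbad]
      have hfrac : (wb + r) / (ω * b) ≤ (wb + r) / (ω * a) :=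
        div_le_div_of_nonneg_left (by positivity) hωa hωab
      have hsum2 : γ / d ^ τ < (wb + wa + 2 * r) / (ω * a) := by
        have he : (wb + r) / (ω * a) + (wa + r) / (ω * a)
            = (wb + wa + 2 * r) / (ω * a) := by ring
        linarith only [hsum, hfrac, he]
      have h2ra : 2 * r / (ω * a) < γ / (2 * d ^ τ) := by
        rw [div_lt_div_iff₀ hωa (by positivity)]
        have h4r : 4 * r * d ^ τ < a * γ ^ 2 := (div_lt_iff₀ hγ2).mp h2
        have h5 : 0 < a * γ * (ω - γ) :=
          mul_pos (mul_pos ha0 hγ0) (by linarith only [hγω])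
        linarith only [h4r, h5]
      have hsum3 : γ / (2 * d ^ τ) < (wb + wa) / (ω * a) := by
        have he : (wb + wa + 2 * r) / (ω * a)
            = (wb + wa) / (ω * a) + 2 * r / (ω * a) := by ring
        have he2 : γ / d ^ τ = γ / (2 * d ^ τ) + γ / (2 * d ^ τ) := by
          rw [← add_div, show γ + γ = 2 * γ by ring,
            mul_div_mul_left γ _ (two_ne_zero)]
        linarith only [hsum2, he, he2, h2ra]
      have hS : γ * (ω * a) < (wb + wa) * (2 * d ^ τ) :=
        (div_lt_div_iff₀ (by positivity) hωa).mp hsum3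
      -- both lower-bounded by t
      set t := γ * ω * (2 * a) ^ (1 - τ) with ht
      have ht0 : 0 < t := by positivity
      have hta : t ≤ wa := by
        refine le_trans (mul_le_mul_of_nonneg_left ?_ (by positivity)) hwa
        exact Real.rpow_le_rpow_of_nonpos ha0 (by linarith) (by linarith)
      have htb : t ≤ wb := by
        refine le_trans (mul_le_mul_of_nonneg_left ?_ (by positivity)) hwb
        exact Real.rpow_le_rpow_of_nonpos hb0 hba (by linarith)
      set S := γ * ω * a / (4 * d ^ τ) with hSdef
      have hS0 : 0 < S := by positivity
      have hPt : t * S ≤ wb * wa := by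
        have hSe : S * (2 * d ^ τ) = γ * ω * a / 2 := by
          rw [hSdef]; field_simp; ring
        rcases le_total wb S with hcase | hcase
        · have h6 : wb * (2 * d ^ τ) ≤ S * (2 * d ^ τ) :=
            mul_le_mul_of_nonneg_right hcase (by positivity)
          have h7 : S * (2 * d ^ τ) < wa * (2 * d ^ τ) := by
            linarith only [hS, h6, hSe]
          have hwa2 : S ≤ wa := (lt_of_mul_lt_mul_right h7 (by positivity)).le
          exact mul_le_mul htb hwa2 hS0.le hwb0.le
        · rw [mul_comm t S]
          exact mul_le_mul hcase hta ht0.le hwb0.le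
      -- lower bound on t * S
      have h2a : (2 * a) ^ (1 - τ) = (2:ℝ) ^ (1 - τ) * a ^ (1 - τ) :=
        Real.mul_rpow (by norm_num) ha0.le
      have hae : a ^ (1 - τ) * a = a ^ (2 - τ) := by
        rw [show (2 - τ) = (1 - τ) + 1 by ring, Real.rpow_add ha0, Real.rpow_one]
      have haτ : d ^ τ ≤ a ^ (2 - τ) := by
        have h := Real.rpow_le_rpow (by positivity) h1.le (by linarith : (0:ℝ) ≤ 2 - τ)
        rwa [← Real.rpow_mul hd0.le, hqτ] at h
      have hA1 : 1 ≤ a ^ (2 - τ) / d ^ τ := (one_le_div hdτ0).mpr haτ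
      have heqtS : t * S = γ ^ 2 * ω ^ 2 * (2:ℝ) ^ (1 - τ) * (a ^ (2 - τ) / d ^ τ) / 4 := by
        rw [ht, hSdef, h2a, ← hae]
        field_simp
      have htS : γ ^ 2 * ω ^ 2 / 8 ≤ t * S := by
        rw [heqtS]
        have h2p : (0:ℝ) < (2:ℝ) ^ (1 - τ) := by positivity
        have p1 : γ ^ 2 * ω ^ 2 * (2:ℝ) ^ (1-τ) * 1
            ≤ γ ^ 2 * ω ^ 2 * (2:ℝ) ^ (1-τ) * (a ^ (2-τ) / d ^ τ) :=
          mul_le_mul_of_nonneg_left hA1 (by positivity)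
        have p2 : γ ^ 2 * ω ^ 2 * (1/2) ≤ γ ^ 2 * ω ^ 2 * (2:ℝ) ^ (1-τ) :=
          mul_le_mul_of_nonneg_left h21 (by positivity)
        linarith only [p1, p2]
      have hPD : γ ^ 2 * ω ^ 2 / 8 * 1 ≤ wb * wa * d ^ (2 * σ) := by
        have hP' : γ ^ 2 * ω ^ 2 / 8 ≤ wb * wa := le_trans htS hPt
        exact mul_le_mul hP' hD1 (by norm_num) (mul_pos hwb0 hwa0).le
      have s1 : L0 * L0 ≤ 1 := by nlinarith only [hL0pos, hL01]
      have m1 : L0 * L0 * (γ ^ 6 * ω ^ 2) ≤ 1 * (γ ^ 6 * ω ^ 2) :=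
        mul_le_mul_of_nonneg_right s1 (by positivity)
      have m2 : γ ^ 6 * ω ^ 2 ≤ γ ^ 2 * ω ^ 2 :=
        mul_le_mul_of_nonneg_right hγ62 (sq_nonneg ω)
      have m4 : (0:ℝ) ≤ γ ^ 2 * ω ^ 2 := by positivity
      linarith only [m1, m2, m4, hPD]

/-- Claim (F1), formula (5.16): the central small-divisor estimate. Under the
first-order Melnikov non-resonance conditions and the eigenvalue asymptotics
`|√λ_{j*} − j*/c| ≤ M/j*` with `j* ≥ 𝔑ωl`, there exists `L > 0`, depending only
on `τ` and the ratio `r = M/𝔑`, such that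
`1/√(ϖ_l ϖ_k) ≤ |k−l|^σ/(Lγ³ω)` for all `k ≠ l` in `{1,…,N}`, where
`σ = τ(τ−1)/(2−τ)`. -/
theorem stmt_10 (τ : ℝ) (hτ : τ ∈ Set.Ioo (1 : ℝ) 2) (r : ℝ) :
    ∃ L : ℝ, 0 < L ∧
      ∀ (γ c M 𝔑 ω : ℝ) (N : ℕ) (lam : ℕ → ℝ) (ϖ : ℕ → ℝ) (jstar : ℕ → ℕ),
        γ ∈ Set.Ioo (0 : ℝ) 1 → 0 < c → 0 < M → 0 < 𝔑 → M / 𝔑 = r → γ < ω →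
        1 ≤ N →
        (∀ j, 0 < lam j) →
        Filter.Tendsto lam Filter.atTop Filter.atTop →
        (∀ l : ℕ, 1 ≤ l → l ≤ N →
          ϖ l = |ω ^ 2 * (l : ℝ) ^ 2 - lam (jstar l)| ∧
          ∀ j : ℕ, ϖ l ≤ |ω ^ 2 * (l : ℝ) ^ 2 - lam j|) →
        (∀ l : ℕ, 1 ≤ l → l ≤ N → ∀ j : ℕ,
          γ / (l : ℝ) ^ τ < |ω * l - Real.sqrt (lam j)|) →
        (∀ l : ℕ, 1 ≤ l → l ≤ N → ∀ j : ℕ,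
          γ / (l : ℝ) ^ τ < |ω * l - (j : ℝ) / c|) →
        (∀ l : ℕ, 1 ≤ l → l ≤ N →
          𝔑 * ω * l ≤ (jstar l : ℝ) ∧
          |Real.sqrt (lam (jstar l)) - (jstar l : ℝ) / c| ≤ M / (jstar l : ℝ)) →
        ∀ k l : ℕ, 1 ≤ k → k ≤ N → 1 ≤ l → l ≤ N → k ≠ l →
          1 / Real.sqrt (ϖ l * ϖ k) ≤
            |(k : ℝ) - (l : ℝ)| ^ (τ * (τ - 1) / (2 - τ)) / (L * γ ^ 3 * ω) := by
  obtain ⟨hτ1, hτ2⟩ := hτ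
  refine ⟨(4 * |r| + 1) ^ (1 - τ) / 4, by positivity, ?_⟩
  intro γ c M 𝔑 ω N lam ϖ jstar hγ hc hM h𝔑 hrdef hγω hN hlam hlamtop hmin hMel1 hMel2 hasym
  intro k l hk1 hkN hl1 hlN hkl
  obtain ⟨hγ0, hγ1⟩ := hγ
  subst hrdef
  have hω0 : 0 < ω := hγ0.trans hγω
  have hr : 0 < M / 𝔑 := div_pos hM h𝔑
  rw [abs_of_pos hr]
  -- basic facts
  have hfacts : ∀ i : ℕ, 1 ≤ i → i ≤ N →
      ϖ i = |ω * i - Real.sqrt (lam (jstar i))| * (ω * i + Real.sqrt (lam (jstar i))) := by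
    intro i hi1 hiN
    obtain ⟨heq, -⟩ := hmin i hi1 hiN
    set s := Real.sqrt (lam (jstar i)) with hs
    have hs0 : 0 ≤ s := Real.sqrt_nonneg _
    have hs2 : s ^ 2 = lam (jstar i) := Real.sq_sqrt (hlam _).le
    have hi0 : (1:ℝ) ≤ (i:ℝ) := by exact_mod_cast hi1
    have hωi : 0 < ω * (i:ℝ) := mul_pos hω0 (by linarith only [hi0])
    have hfac : ω ^ 2 * (i:ℝ) ^ 2 - lam (jstar i) = (ω * i - s) * (ω * i + s) := by
      rw [← hs2]; ring
    rw [heq, hfac, abs_mul, abs_of_pos (by linarith : (0:ℝ) < ω * (i:ℝ) + s)]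
  have hϖlow : ∀ i : ℕ, 1 ≤ i → i ≤ N → γ * ω * (i:ℝ) ^ (1 - τ) ≤ ϖ i := by
    intro i hi1 hiN
    have habs := hfacts i hi1 hiN
    set s := Real.sqrt (lam (jstar i)) with hs
    have hs0 : 0 ≤ s := Real.sqrt_nonneg _
    have hi0 : (1:ℝ) ≤ (i:ℝ) := by exact_mod_cast hi1
    have hi0' : (0:ℝ) < (i:ℝ) := by linarith only [hi0]
    have hωi : 0 < ω * (i:ℝ) := mul_pos hω0 hi0'
    have hm := hMel1 i hi1 hiN (jstar i)
    have h1 : γ / (i:ℝ) ^ τ * (ω * i) ≤ |ω * i - s| * (ω * i + s) :=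
      mul_le_mul hm.le (by linarith) hωi.le (abs_nonneg _)
    have h2 : γ / (i:ℝ) ^ τ * (ω * i) = γ * ω * (i:ℝ) ^ (1 - τ) := by
      rw [Real.rpow_sub hi0', Real.rpow_one]
      have hiτ : (0:ℝ) < (i:ℝ) ^ τ := Real.rpow_pos_of_pos hi0' τ
      field_simp
    rw [habs]
    linarith [h1, h2.symm.le, h2.le]
  have hϖpos : ∀ i : ℕ, 1 ≤ i → i ≤ N → 0 < ϖ i := by
    intro i hi1 hiN
    have h0 := hϖlow i hi1 hiN
    have hi0' : (0:ℝ) < (i:ℝ) := by exact_mod_cast hi1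
    exact lt_of_lt_of_le (mul_pos (mul_pos hγ0 hω0) (Real.rpow_pos_of_pos hi0' _)) h0
  have hF2 : ∀ i : ℕ, 1 ≤ i → i ≤ N →
      |ω * (i:ℝ) - (jstar i : ℝ) / c| ≤ (ϖ i + M / 𝔑) / (ω * (i:ℝ)) := by
    intro i hi1 hiN
    have habs := hfacts i hi1 hiN
    obtain ⟨hjge, hjasym⟩ := hasym i hi1 hiN
    set s := Real.sqrt (lam (jstar i)) with hs
    have hs0 : 0 ≤ s := Real.sqrt_nonneg _
    have hi0 : (1:ℝ) ≤ (i:ℝ) := by exact_mod_cast hi1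
    have hωi : 0 < ω * (i:ℝ) := mul_pos hω0 (by linarith only [hi0])
    have h𝔑ωi : 0 < 𝔑 * ω * (i:ℝ) := by positivity
    have hj0 : 0 < (jstar i : ℝ) := lt_of_lt_of_le h𝔑ωi hjge
    have h1 : |ω * i - s| ≤ ϖ i / (ω * i) := by
      rw [le_div_iff₀ hωi, habs]
      exact mul_le_mul_of_nonneg_left (by linarith) (abs_nonneg _)
    have h2 : |s - (jstar i : ℝ) / c| ≤ (M / 𝔑) / (ω * i) := by
      refine le_trans hjasym ?_
      have he : (M / 𝔑) / (ω * (i:ℝ)) = M / (𝔑 * (ω * i)) := by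
        rw [div_div]
      rw [he]
      exact div_le_div_of_nonneg_left hM.le (by positivity)
        (by rw [← mul_assoc]; exact hjge)
    calc |ω * (i:ℝ) - (jstar i : ℝ) / c|
        ≤ |ω * (i:ℝ) - s| + |s - (jstar i : ℝ) / c| := abs_sub_le _ _ _
      _ ≤ ϖ i / (ω * i) + (M / 𝔑) / (ω * i) := add_le_add h1 h2
      _ = (ϖ i + M / 𝔑) / (ω * (i:ℝ)) := by ring
  have hF3 : ∀ p q : ℕ, 1 ≤ p → q ≤ N → p < q →
      γ / ((q:ℝ) - p) ^ τ
        < (ϖ q + M / 𝔑) / (ω * q) + (ϖ p + M / 𝔑) / (ω * p) := by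
    intro p q hp1 hqN hpq
    have hq1 : 1 ≤ q := le_trans hp1 hpq.le
    have hpN : p ≤ N := le_trans hpq.le hqN
    have hdn1 : 1 ≤ q - p := by omega
    have hdnN : q - p ≤ N := le_trans (Nat.sub_le q p) hqN
    have hcast : ((q - p : ℕ) : ℝ) = (q:ℝ) - p := by
      have := Nat.cast_sub hpq.le (R := ℝ); exact this
    have hd1' : (1:ℝ) ≤ (q:ℝ) - p := by
      rw [← hcast]; exact_mod_cast hdn1
    have hstep : γ / ((q:ℝ) - p) ^ τ
        < |ω * ((q:ℝ) - p) - ((jstar q : ℝ) - jstar p) / c| := by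
      rcases le_or_gt (jstar p) (jstar q) with hj | hj
      · have h := hMel2 (q - p) hdn1 hdnN (jstar q - jstar p)
        rw [hcast] at h
        have hc2 : ((jstar q - jstar p : ℕ) : ℝ) = (jstar q : ℝ) - jstar p :=
          Nat.cast_sub hj
        rwa [hc2] at h
      · have hx : ((jstar q : ℝ) - jstar p) / c < 0 := by
          apply div_neg_of_neg_of_pos _ hc
          have : (jstar q : ℝ) < jstar p := by exact_mod_cast hj
          linarith
        have hdτ1 : (1:ℝ) ≤ ((q:ℝ) - p) ^ τ := Real.one_le_rpow hd1' (by linarith)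
        have hle : γ / ((q:ℝ) - p) ^ τ ≤ γ := by
          rw [div_le_iff₀ (by linarith only [hdτ1] : (0:ℝ) < ((q:ℝ) - p) ^ τ)]
          nlinarith only [hγ0, hdτ1]
        have h3 : ω ≤ ω * ((q:ℝ) - p) := by nlinarith only [hω0, hd1']
        have h4 : ω * ((q:ℝ) - p) ≤ ω * ((q:ℝ) - p) - ((jstar q : ℝ) - jstar p) / c := by
          linarith
        calc γ / ((q:ℝ) - p) ^ τ ≤ γ := hle
          _ < ω := hγω
          _ ≤ ω * ((q:ℝ) - p) - ((jstar q : ℝ) - jstar p) / c := by linarith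
          _ ≤ _ := le_abs_self _
    have htri : |ω * ((q:ℝ) - p) - ((jstar q : ℝ) - jstar p) / c|
        ≤ |ω * (q:ℝ) - (jstar q : ℝ) / c| + |ω * (p:ℝ) - (jstar p : ℝ) / c| := by
      have he : ω * ((q:ℝ) - p) - ((jstar q : ℝ) - jstar p) / c
          = (ω * (q:ℝ) - (jstar q : ℝ) / c) - (ω * (p:ℝ) - (jstar p : ℝ) / c) := by
        ring
      rw [he]
      exact abs_sub _ _
    exact lt_of_lt_of_le hstep
      (htri.trans (add_le_add (hF2 q hq1 hqN) (hF2 p hp1 hpN)))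
  -- assemble
  have hXpos : 0 < (4 * (M / 𝔑) + 1) ^ (1 - τ) / 4 * γ ^ 3 * ω := by
    refine mul_pos (mul_pos ?_ (pow_pos hγ0 3)) hω0
    exact div_pos (Real.rpow_pos_of_pos (by linarith) _) (by norm_num)
  rcases Nat.lt_or_ge k l with hlt | hge
  · have hk1' : (1:ℝ) ≤ (k:ℝ) := by exact_mod_cast hk1
    have hd1 : (1:ℝ) ≤ (l:ℝ) - k := by
      have : (k:ℝ) + 1 ≤ l := by exact_mod_cast hlt
      linarith
    have hcore := claimF1_core τ γ ω (M / 𝔑) (k:ℝ) (l:ℝ) (ϖ k) (ϖ l)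
      hτ1 hτ2 hγ0 hγ1 hγω hr hk1' hd1
      (hϖlow k hk1 hkN) (hϖlow l hl1 hlN) (hF3 k l hk1 hlN hlt)
    rw [abs_sub_comm, abs_of_nonneg (by linarith : (0:ℝ) ≤ (l:ℝ) - k)]
    exact finish_aux' _ _ _ _
      (mul_pos (hϖpos l hl1 hlN) (hϖpos k hk1 hkN)) (by linarith) hXpos hcore
  · have hgt : l < k := lt_of_le_of_ne hge (by omega)
    have hl1' : (1:ℝ) ≤ (l:ℝ) := by exact_mod_cast hl1
    have hd1 : (1:ℝ) ≤ (k:ℝ) - l := by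
      have : (l:ℝ) + 1 ≤ k := by exact_mod_cast hgt
      linarith
    have hcore := claimF1_core τ γ ω (M / 𝔑) (l:ℝ) (k:ℝ) (ϖ l) (ϖ k)
      hτ1 hτ2 hγ0 hγ1 hγω hr hl1' hd1
      (hϖlow l hl1 hlN) (hϖlow k hk1 hkN) (hF3 l k hl1 hkN hgt)
    rw [mul_comm (ϖ l) (ϖ k), abs_of_nonneg (by linarith : (0:ℝ) ≤ (k:ℝ) - l)]
    exact finish_aux' _ _ _ _
      (mul_pos (hϖpos k hk1 hkN) (hϖpos l hl1 hlN)) (by linarith) hXpos hcore
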